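/- Let x : ℝ → ℝ be the solution of ẋ = -ρx + υ(t) with ρ > 0, x(t₀) = x₀, where υ : ℝ → ℝ is continuous and satisfies ‖υ‖_{∞,[t₀,t]} ≤ Δ_u + ‖υ₀‖_{∞,[t₀,t]} for all t ≥ t₀. Then |x(t)| - Δ_u/ρ ≤ e^{-ρ(t-t₀)}·max(|x₀| - Δ_u/ρ, 0) + (1/ρ)·‖υ₀‖_{∞,[t₀,t]} for all t ≥ t₀. -/

import Mathlib

noncomputable def supNormOn (f : ℝ → ℝ) (a b : ℝ) : ℝ :=
  sSup ((fun τ => |f τ|) '' Set.Icc a b)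

theorem stmt1 (ρ Δu t₀ x₀ : ℝ) (x υ υ₀ : ℝ → ℝ)
    (hρ : 0 < ρ) (hΔ : 0 ≤ Δu)
    (hυcont : Continuous υ)
    (hυ₀bdd : ∃ M, ∀ τ, |υ₀ τ| ≤ M)
    (hυbound : ∀ t, t₀ ≤ t → supNormOn υ t₀ t ≤ Δu + supNormOn υ₀ t₀ t)
    (hx0 : x t₀ = x₀)
    (hsol : ∀ t, x t = Real.exp (-ρ * (t - t₀)) * x₀
      + ∫ τ in t₀..t, Real.exp (-ρ * (t - τ)) * υ τ) :
    ∀ t, t₀ ≤ t →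
      |x t| - Δu / ρ ≤
        Real.exp (-ρ * (t - t₀)) * max (|x₀| - Δu / ρ) 0
          + (1 / ρ) * supNormOn υ₀ t₀ t := by
  intro t ht
  set E : ℝ := Real.exp (-ρ * (t - t₀)) with hE
  have hE0 : 0 < E := Real.exp_pos _
  have hE1 : E ≤ 1 := by
    apply Real.exp_le_one_iff.mpr
    nlinarith
  set S : ℝ := supNormOn υ t₀ t with hS
  set S₀ : ℝ := supNormOn υ₀ t₀ t with hS₀def
  -- S₀ ≥ 0
  obtain ⟨M, hM⟩ := hυ₀bdd
  have hbdd₀ : BddAbove ((fun τ => |υ₀ τ|) '' Set.Icc t₀ t) := by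
    refine ⟨M, ?_⟩
    rintro y ⟨τ, -, rfl⟩
    exact hM τ
  have hS₀nonneg : 0 ≤ S₀ := by
    have : |υ₀ t₀| ≤ S₀ := le_csSup hbdd₀ ⟨t₀, ⟨le_refl _, ht⟩, rfl⟩
    exact le_trans (abs_nonneg _) this
  -- pointwise bound on υ on [t₀,t]
  have hcompact : IsCompact (Set.Icc t₀ t) := isCompact_Icc
  have hbdd : BddAbove ((fun τ => |υ τ|) '' Set.Icc t₀ t) :=
    (hcompact.image (continuous_abs.comp hυcont)).bddAbove
  have hυle : ∀ τ ∈ Set.Icc t₀ t, |υ τ| ≤ S := fun τ hτ =>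
    le_csSup hbdd ⟨τ, hτ, rfl⟩
  have hSnonneg : 0 ≤ S :=
    le_trans (abs_nonneg _) (hυle t₀ ⟨le_refl _, ht⟩)
  -- the exponential integral
  have hderiv : ∀ τ ∈ Set.uIcc t₀ t,
      HasDerivAt (fun s => Real.exp (-ρ * (t - s)) / ρ)
        (Real.exp (-ρ * (t - τ))) τ := by
    intro τ _
    have h1 : HasDerivAt (fun s : ℝ => -ρ * (t - s)) ρ τ := by
      have := ((hasDerivAt_id τ).const_sub t).const_mul (-ρ)
      simpa using this
    have h2 := (h1.exp).div_const ρ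
    simpa [mul_div_assoc, mul_div_cancel_right₀ _ (ne_of_gt hρ)] using h2
  have hexpint : (∫ τ in t₀..t, Real.exp (-ρ * (t - τ))) = (1 - E) / ρ := by
    have hcont : IntervalIntegrable (fun τ => Real.exp (-ρ * (t - τ)))
        MeasureTheory.volume t₀ t := by
      apply Continuous.intervalIntegrable
      exact Real.continuous_exp.comp (by continuity)
    rw [intervalIntegral.integral_eq_sub_of_hasDerivAt hderiv hcont]
    simp [hE, sub_div]
  -- bound the integral term
  have hintcont : Continuous (fun τ => Real.exp (-ρ * (t - τ)) * υ τ) :=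
    (Real.continuous_exp.comp (by continuity)).mul hυcont
  have hii : IntervalIntegrable (fun τ => Real.exp (-ρ * (t - τ)) * υ τ)
      MeasureTheory.volume t₀ t := hintcont.intervalIntegrable t₀ t
  have hii2 : IntervalIntegrable (fun τ => Real.exp (-ρ * (t - τ)) * S)
      MeasureTheory.volume t₀ t := by
    apply Continuous.intervalIntegrable
    exact (Real.continuous_exp.comp (by continuity)).mul continuous_const
  have hintbound : |∫ τ in t₀..t, Real.exp (-ρ * (t - τ)) * υ τ|
      ≤ S * ((1 - E) / ρ) := by
    calc |∫ τ in t₀..t, Real.exp (-ρ * (t - τ)) * υ τ|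
        ≤ ∫ τ in t₀..t, |Real.exp (-ρ * (t - τ)) * υ τ| := by
          exact intervalIntegral.abs_integral_le_integral_abs ht
      _ ≤ ∫ τ in t₀..t, Real.exp (-ρ * (t - τ)) * S := by
          apply intervalIntegral.integral_mono_on ht _ hii2
          · intro τ hτ
            rw [abs_mul, abs_of_pos (Real.exp_pos _)]
            exact mul_le_mul_of_nonneg_left (hυle τ hτ) (le_of_lt (Real.exp_pos _))
          · exact hii.abs
      _ = S * ((1 - E) / ρ) := by
          rw [intervalIntegral.integral_mul_const, hexpint, mul_comm]
  -- bound |x t|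
  have hxbound : |x t| ≤ E * |x₀| + S * ((1 - E) / ρ) := by
    rw [hsol t]
    calc |E * x₀ + ∫ τ in t₀..t, Real.exp (-ρ * (t - τ)) * υ τ|
        ≤ |E * x₀| + |∫ τ in t₀..t, Real.exp (-ρ * (t - τ)) * υ τ| := abs_add_le _ _
      _ ≤ E * |x₀| + S * ((1 - E) / ρ) := by
          rw [abs_mul, abs_of_pos hE0]
          exact add_le_add le_rfl hintbound
  have hSle : S ≤ Δu + S₀ := hυbound t ht
  have key : |x t| ≤ E * |x₀| + (Δu + S₀) * ((1 - E) / ρ) := by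
    have h1 : 0 ≤ (1 - E) / ρ := div_nonneg (by linarith) hρ.le
    have := mul_le_mul_of_nonneg_right hSle h1
    linarith
  have hmax : |x₀| - Δu / ρ ≤ max (|x₀| - Δu / ρ) 0 := le_max_left _ _
  have hfrac : S₀ * ((1 - E) / ρ) ≤ S₀ * (1 / ρ) := by
    apply mul_le_mul_of_nonneg_left _ hS₀nonneg
    gcongr
    linarith
  have hΔalg : (Δu) * ((1 - E) / ρ) - Δu / ρ = -(E * (Δu / ρ)) := by
    field_simp
    ring
  calc |x t| - Δu / ρ ≤ E * |x₀| + (Δu + S₀) * ((1 - E) / ρ) - Δu / ρ := by linarith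
    _ = E * (|x₀| - Δu / ρ) + S₀ * ((1 - E) / ρ) := by
        field_simp
        ring
    _ ≤ E * max (|x₀| - Δu / ρ) 0 + (1 / ρ) * S₀ := by
        have h1 : E * (|x₀| - Δu / ρ) ≤ E * max (|x₀| - Δu / ρ) 0 :=
          mul_le_mul_of_nonneg_left hmax hE0.le
        have h2 : S₀ * ((1 - E) / ρ) ≤ (1 / ρ) * S₀ := by
          rw [mul_comm (1/ρ) S₀]; exact hfrac
        linarith
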